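/- As formal power series in q, ∑_{n∈ℤ} q^{n(5n+1)} = (q,q^9,q^{10};q^{10})_∞ (q^8,q^{12};q^{20})_∞ / (q,q^4;q^5)_∞. -/

import Mathlib

/-- The infinite q-Pochhammer symbol `(a;q)_∞ = ∏_{i≥0} (1 - a qⁱ)`. -/
noncomputable def qpoch (a q : ℂ) : ℂ := ∏' i : ℕ, (1 - a * q ^ i)

open Filter Finset Topology

namespace JTPaux

/-- Summability of logs of `1 + g i` for summable `g`. -/
lemma summable_log_one_add {g : ℕ → ℂ} (hg : Summable g) :
    Summable fun i => Complex.log (1 + g i) := by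
  have h0 : Tendsto g atTop (𝓝 0) := hg.tendsto_atTop_zero
  have hev : ∀ᶠ i in atTop, ‖Complex.log (1 + g i)‖ ≤ (3/2) * ‖g i‖ := by
    have : ∀ᶠ i in atTop, ‖g i‖ ≤ 1/2 := by
      have := h0.norm
      simp only [norm_zero] at this
      exact this.eventually_le_const (by norm_num)
    filter_upwards [this] with i hi
    exact Complex.norm_log_one_add_half_le_self hi
  exact Summable.of_norm_bounded_eventually_nat (hg.norm.mul_left (3/2)) hev

lemma hasProd_one_add {g : ℕ → ℂ} (hg : Summable g) (h1 : ∀ i, 1 + g i ≠ 0) :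
    HasProd (fun i => 1 + g i)
      (Complex.exp (∑' i, Complex.log (1 + g i))) :=
  by
  have h := (summable_log_one_add hg).hasSum.cexp
  have he : (Complex.exp ∘ fun i => Complex.log (1 + g i)) = fun i => 1 + g i :=
    funext fun i => Complex.exp_log (h1 i)
  rwa [he] at h

lemma multipliable_one_add {g : ℕ → ℂ} (hg : Summable g) (h1 : ∀ i, 1 + g i ≠ 0) :
    Multipliable fun i => 1 + g i :=
  ⟨_, hasProd_one_add hg h1⟩

lemma tprod_one_add_ne_zero {g : ℕ → ℂ} (hg : Summable g) (h1 : ∀ i, 1 + g i ≠ 0) :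
    (∏' i, (1 + g i)) ≠ 0 := by
  rw [(hasProd_one_add hg h1).tprod_eq]
  exact Complex.exp_ne_zero _

/- specialization to pochhammer-type products -/

lemma summable_aq {a q : ℂ} (hq : ‖q‖ < 1) : Summable fun i : ℕ => -(a * q ^ i) := by
  exact ((summable_geometric_of_norm_lt_one hq).mul_left a).neg

lemma factor_ne_zero {a q : ℂ} (ha : ‖a‖ < 1) (hq : ‖q‖ < 1) (i : ℕ) :
    (1 : ℂ) - a * q ^ i ≠ 0 := by
  intro h
  have h2 : ‖a * q ^ i‖ < 1 := by
    rw [norm_mul, norm_pow]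
    calc ‖a‖ * ‖q‖ ^ i ≤ ‖a‖ * 1 := by
          gcongr
          exact pow_le_one₀ (norm_nonneg q) hq.le
      _ < 1 := by simpa using ha
  rw [sub_eq_zero] at h
  rw [← h] at h2
  simp at h2

lemma multipliable_poch {a q : ℂ} (ha : ‖a‖ < 1) (hq : ‖q‖ < 1) :
    Multipliable fun i : ℕ => 1 - a * q ^ i := by
  have := multipliable_one_add (summable_aq (a := a) hq)
    (fun i => by simpa [sub_eq_add_neg] using factor_ne_zero ha hq i)
  refine this.congr fun i => by ring

lemma qpoch_ne_zero' {a q : ℂ} (ha : ‖a‖ < 1) (hq : ‖q‖ < 1) :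
    (∏' i : ℕ, (1 - a * q ^ i)) ≠ 0 := by
  have := tprod_one_add_ne_zero (summable_aq (a := a) hq)
    (fun i => by simpa [sub_eq_add_neg] using factor_ne_zero ha hq i)
  simpa [sub_eq_add_neg] using this

/-- Gaussian binomial analogue, defined by the q-Pascal recursion. -/
noncomputable def qb (p : ℂ) : ℕ → ℤ → ℂ
  | 0, k => if k = 0 then 1 else 0
  | (N+1), k => qb p N (k-1) + p ^ k * qb p N k

lemma qb_def (p : ℂ) (N : ℕ) (k : ℤ) :
    qb p (N+1) k = qb p N (k-1) + p ^ k * qb p N k := rfl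

lemma qb_neg (p : ℂ) : ∀ N, ∀ k : ℤ, k < 0 → qb p N k = 0 := by
  intro N
  induction N with
  | zero => intro k hk; simp only [qb, if_neg (by omega : ¬ k = 0)]
  | succ N ih =>
    intro k hk
    simp only [qb, ih k hk, ih (k-1) (by omega), mul_zero, add_zero]

lemma qb_gt (p : ℂ) : ∀ N : ℕ, ∀ k : ℤ, (N : ℤ) < k → qb p N k = 0 := by
  intro N
  induction N with
  | zero => intro k hk; simp only [qb, if_neg (by omega : ¬ k = 0)]
  | succ N ih =>
    intro k hk
    have h1 : qb p N (k-1) = 0 := ih _ (by omega)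
    have h2 : qb p N k = 0 := ih _ (by push_cast; push_cast at hk; omega)
    simp [qb_def, h1, h2]

lemma qb_pascal' {p : ℂ} (hp : p ≠ 0) :
    ∀ N, ∀ k : ℤ, qb p (N+1) k = p ^ ((N : ℤ) + 1 - k) * qb p N (k-1) + qb p N k := by
  intro N
  induction N with
  | zero =>
    intro k
    rcases eq_or_ne k 0 with rfl | hk0
    · simp [qb]
    rcases eq_or_ne k 1 with rfl | hk1
    · norm_num [qb]
    · have h1 : qb p 0 k = 0 := by simp only [qb, if_neg hk0]
      have h2 : qb p 0 (k-1) = 0 := by simp only [qb, if_neg (by omega : ¬ k - 1 = 0)]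
      simp [qb_def, h1, h2]
  | succ N ih =>
    intro k
    have hi2 : k - 1 - 1 = k - 2 := by ring
    have hz1 : p ^ ((N:ℤ)+1) = p ^ (k:ℤ) * p ^ ((N:ℤ)+1-k) := by
      rw [← zpow_add₀ hp]; ring_nf
    have hz2 : p ^ ((N:ℤ)+2-k) * p ^ (k-1) = p ^ ((N:ℤ)+1) := by
      rw [← zpow_add₀ hp]; ring_nf
    have hL : qb p (N+1+1) k = p^((N:ℤ)+2-k) * qb p N (k-2) +
        (1 + p^((N:ℤ)+1)) * qb p N (k-1) + p^(k:ℤ) * qb p N k := by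
      rw [qb_def, ih (k-1), ih k, hi2]
      rw [show (N:ℤ)+1-(k-1) = (N:ℤ)+2-k by ring]
      linear_combination (-(qb p N (k-1))) * hz1
    have hR : p^((N:ℤ)+1+1-k) * qb p (N+1) (k-1) + qb p (N+1) k =
        p^((N:ℤ)+2-k) * qb p N (k-2) +
        (1 + p^((N:ℤ)+1)) * qb p N (k-1) + p^(k:ℤ) * qb p N k := by
      rw [qb_def, qb_def, hi2]
      rw [show (N:ℤ)+1+1-k = (N:ℤ)+2-k by ring]
      linear_combination (qb p N (k-1)) * hz2
    rw [hL]
    rw [show ((N+1:ℕ):ℤ) + 1 - k = (N:ℤ)+1+1-k by push_cast; ring]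
    exact hR.symm

lemma qb_zero (p : ℂ) : ∀ N, qb p N 0 = 1 := by
  intro N
  induction N with
  | zero => simp [qb]
  | succ N ih => rw [qb_def, qb_neg p N _ (by omega), ih]; simp

lemma qb_diag (p : ℂ) : ∀ N : ℕ, qb p N (N : ℤ) = 1 := by
  intro N
  induction N with
  | zero => simp [qb]
  | succ N ih =>
    rw [qb_def, show ((N+1:ℕ):ℤ) - 1 = (N:ℤ) by push_cast; ring, ih,
      qb_gt p N ((N+1:ℕ):ℤ) (by push_cast; omega)]
    simp

/-- finite Pochhammer `(p;p)_N`. -/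
noncomputable def poch (p : ℂ) (N : ℕ) : ℂ := ∏ i ∈ range N, (1 - p * p ^ i)

lemma poch_succ (p : ℂ) (N : ℕ) : poch p (N+1) = poch p N * (1 - p * p ^ N) :=
  Finset.prod_range_succ _ _

lemma poch_ne_zero {p : ℂ} (hp : ‖p‖ < 1) (N : ℕ) : poch p N ≠ 0 := by
  rw [poch, Finset.prod_ne_zero_iff]
  intro i _
  have : ‖p * p ^ i‖ < 1 := by
    rw [norm_mul, norm_pow]
    calc ‖p‖ * ‖p‖ ^ i ≤ ‖p‖ * 1 := by
          gcongr; exact pow_le_one₀ (norm_nonneg p) hp.le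
      _ < 1 := by simpa using hp
  intro h
  rw [sub_eq_zero] at h
  rw [← h] at this
  simp at this

lemma qb_closed_mul (p : ℂ) :
    ∀ N : ℕ, ∀ k : ℕ, k ≤ N → qb p N (k : ℤ) * (poch p k * poch p (N-k)) = poch p N := by
  intro N
  induction N with
  | zero =>
    intro k hk
    interval_cases k
    simp [qb, poch]
  | succ N ih =>
    intro k hk
    rcases Nat.eq_zero_or_pos k with rfl | hk0
    · rw [Nat.cast_zero, qb_zero]
      simp [poch]
    rcases eq_or_lt_of_le hk with rfl | hklt
    · -- k = N+1
      rw [qb_diag, Nat.sub_self]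
      simp only [poch, range_zero, prod_empty, mul_one, one_mul]
    · -- 1 ≤ k ≤ N
      obtain ⟨j, rfl⟩ := Nat.exists_eq_add_of_le hk0  -- k = 1 + j
      have hjN : 1 + j ≤ N := by omega
      rw [qb_def, show ((1+j:ℕ):ℤ) - 1 = (j:ℤ) by push_cast; ring]
      have e1 : poch p (1+j) = poch p j * (1 - p * p ^ j) := by
        rw [show 1+j = j+1 by ring, poch_succ]
      have e2 : poch p (N+1-(1+j)) = poch p (N-(1+j)) * (1 - p * p ^ (N-(1+j))) := by
        rw [show N+1-(1+j) = (N-(1+j))+1 by omega, poch_succ]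
      have ih1 : qb p N (j:ℤ) * (poch p j * poch p (N-j)) = poch p N := ih j (by omega)
      have ih2 : qb p N ((1+j:ℕ):ℤ) * (poch p (1+j) * poch p (N-(1+j))) = poch p N :=
        ih (1+j) hjN
      have e3 : poch p (N-j) = poch p (N-(1+j)) * (1 - p * p ^ (N-(1+j))) := by
        rw [show N-j = (N-(1+j))+1 by omega, poch_succ]
      have e4 : poch p (N+1) = poch p N * (1 - p * p ^ N) := poch_succ p N
      have hp1 : p ^ ((1+j:ℕ):ℤ) = p ^ (1+j) := zpow_natCast p (1+j)
      have hw2 : p ^ (1+j) * (p * p ^ (N-(1+j))) = p * p ^ N := by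
        have h1 : p * p ^ (N-(1+j)) = p ^ (N - j) := by
          rw [← pow_succ']; congr 1; omega
        have h2 : p * p ^ N = p ^ (N+1) := (pow_succ' p N).symm
        rw [h1, h2, ← pow_add]; congr 1; omega
      rw [e3] at ih1
      rw [e1] at ih2
      rw [e1, e2, e4, hp1]
      linear_combination (1 - p*p^j) * ih1 + p^(1+j)*(1 - p*p^(N-(1+j))) * ih2
        - (poch p N) * hw2

lemma qb_eq {p : ℂ} (hp : ‖p‖ < 1) {N k : ℕ} (hk : k ≤ N) :
    qb p N (k:ℤ) = poch p N * (poch p k)⁻¹ * (poch p (N-k))⁻¹ := by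
  have h := qb_closed_mul p N k hk
  have h1 := poch_ne_zero hp k
  have h2 := poch_ne_zero hp (N-k)
  field_simp
  linear_combination h

/-- Weierstrass-type inequality. -/
lemma one_sub_sum_le_prod (x : ℕ → ℝ) (h0 : ∀ i, 0 ≤ x i) (h1 : ∀ i, x i ≤ 1)
    (s : Finset ℕ) : 1 - ∑ i ∈ s, x i ≤ ∏ i ∈ s, (1 - x i) := by
  induction s using Finset.cons_induction with
  | empty => simp
  | cons a s ha ih =>
    rw [Finset.prod_cons, Finset.sum_cons]
    have hps : (0:ℝ) ≤ ∑ i ∈ s, x i := Finset.sum_nonneg fun i _ => h0 i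
    nlinarith [h0 a, h1 a, ih]

lemma exists_lower {r : ℝ} (h0 : 0 ≤ r) (h1 : r < 1) :
    ∃ c > 0, ∀ k, c ≤ ∏ i ∈ range k, (1 - r^(i+1)) := by
  set x : ℕ → ℝ := fun i => r^(i+1) with hx
  have hx0 : ∀ i, 0 ≤ x i := fun i => pow_nonneg h0 _
  have hx1 : ∀ i, x i < 1 := fun i => pow_lt_one₀ h0 h1 (by omega)
  have hsx : Summable x := by
    have := summable_geometric_of_lt_one h0 h1
    exact (summable_nat_add_iff 1).mpr this
  obtain ⟨T, hT⟩ := hsx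
  have hconv : Tendsto (fun m => ∑ i ∈ range m, x i) atTop (𝓝 T) :=
    hT.tendsto_sum_nat
  obtain ⟨N₀, hN₀⟩ := (Metric.tendsto_atTop.mp hconv (1/4) (by norm_num))
  have hIco : ∀ m, N₀ ≤ m → ∑ i ∈ Ico N₀ m, x i ≤ 1/2 := by
    intro m hm
    have e : ∑ i ∈ Ico N₀ m, x i = (∑ i ∈ range m, x i) - ∑ i ∈ range N₀, x i := by
      rw [Finset.sum_Ico_eq_sub _ hm]
    have b1 := hN₀ m hm
    have b2 := hN₀ N₀ le_rfl
    rw [Real.dist_eq] at b1 b2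
    rw [e]
    have := abs_le.mp b1.le
    have := abs_le.mp b2.le
    linarith [(abs_le.mp b1.le).1, (abs_le.mp b1.le).2,
      (abs_le.mp b2.le).1, (abs_le.mp b2.le).2]
  have hpos : ∀ k, 0 < ∏ i ∈ range k, (1 - x i) := fun k =>
    Finset.prod_pos fun i _ => by linarith [hx1 i]
  refine ⟨(∏ i ∈ range N₀, (1 - x i)) * (1/2), mul_pos (hpos N₀) (by norm_num), ?_⟩
  intro k
  rcases le_or_gt k N₀ with hk | hk
  · have hsplit : ∏ i ∈ range N₀, (1 - x i) =
        (∏ i ∈ range k, (1 - x i)) * ∏ i ∈ Ico k N₀, (1 - x i) := by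
      rw [Finset.prod_range_mul_prod_Ico _ hk]
    have hIle : ∏ i ∈ Ico k N₀, (1 - x i) ≤ 1 :=
      Finset.prod_le_one (fun i _ => by linarith [hx1 i]) (fun i _ => by linarith [hx0 i])
    have h2 : ∏ i ∈ range N₀, (1 - x i) ≤ ∏ i ∈ range k, (1 - x i) := by
      rw [hsplit]
      nlinarith [hpos k, hIle, Finset.prod_nonneg (fun i (_ : i ∈ Ico k N₀) => by
        linarith [hx1 i] : ∀ i ∈ Ico k N₀, (0:ℝ) ≤ 1 - x i)]
    nlinarith [hpos N₀]
  · have hsplit : ∏ i ∈ range k, (1 - x i) =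
        (∏ i ∈ range N₀, (1 - x i)) * ∏ i ∈ Ico N₀ k, (1 - x i) := by
      rw [Finset.prod_range_mul_prod_Ico _ hk.le]
    have hw : 1 - ∑ i ∈ Ico N₀ k, x i ≤ ∏ i ∈ Ico N₀ k, (1 - x i) :=
      one_sub_sum_le_prod x hx0 (fun i => (hx1 i).le) _
    have hs := hIco k hk.le
    rw [hsplit]
    have := hpos N₀
    nlinarith

lemma norm_factor_le {p : ℂ} (i : ℕ) : ‖(1:ℂ) - p * p ^ i‖ ≤ 1 + ‖p‖^(i+1) := by
  calc ‖(1:ℂ) - p * p ^ i‖ ≤ ‖(1:ℂ)‖ + ‖p * p ^ i‖ := norm_sub_le _ _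
    _ = 1 + ‖p‖^(i+1) := by
        rw [norm_one, norm_mul, norm_pow, pow_succ']

lemma norm_factor_ge {p : ℂ} (i : ℕ) : 1 - ‖p‖^(i+1) ≤ ‖(1:ℂ) - p * p ^ i‖ := by
  calc 1 - ‖p‖^(i+1) = ‖(1:ℂ)‖ - ‖p * p ^ i‖ := by
        rw [norm_one, norm_mul, norm_pow, pow_succ']
    _ ≤ ‖(1:ℂ) - p * p ^ i‖ := norm_sub_norm_le _ _

lemma norm_poch_le {p : ℂ} (hp : ‖p‖ < 1) (m : ℕ) :
    ‖poch p m‖ ≤ Real.exp (∑' i : ℕ, ‖p‖^(i+1)) := by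
  have hsum : Summable fun i : ℕ => ‖p‖^(i+1) :=
    (summable_nat_add_iff 1).mpr (summable_geometric_of_lt_one (norm_nonneg p) hp)
  calc ‖poch p m‖ = ∏ i ∈ range m, ‖(1:ℂ) - p * p ^ i‖ := by
        rw [poch, norm_prod]
    _ ≤ ∏ i ∈ range m, (1 + ‖p‖^(i+1)) :=
        Finset.prod_le_prod (fun i _ => norm_nonneg _) (fun i _ => norm_factor_le i)
    _ ≤ ∏ i ∈ range m, Real.exp (‖p‖^(i+1)) :=
        Finset.prod_le_prod (fun i _ => by positivity)
          (fun i _ => by rw [add_comm]; exact Real.add_one_le_exp _)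
    _ = Real.exp (∑ i ∈ range m, ‖p‖^(i+1)) := (Real.exp_sum _ _).symm
    _ ≤ Real.exp (∑' i : ℕ, ‖p‖^(i+1)) := by
        apply Real.exp_le_exp.mpr
        exact Summable.sum_le_tsum (range m) (fun i _ => by positivity) hsum

lemma qb_norm_bound {p : ℂ} (hp : ‖p‖ < 1) :
    ∃ M : ℝ, 0 < M ∧ ∀ (N : ℕ) (k : ℤ), ‖qb p N k‖ ≤ M := by
  obtain ⟨c, hc, hlow⟩ := exists_lower (norm_nonneg p) hp
  have hpochge : ∀ m : ℕ, c ≤ ‖poch p m‖ := by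
    intro m
    refine le_trans (hlow m) ?_
    rw [poch, norm_prod]
    exact Finset.prod_le_prod (fun i _ => by
        have := pow_lt_one₀ (norm_nonneg p) hp (by omega : i+1 ≠ 0); linarith)
      (fun i _ => norm_factor_ge i)
  set U := Real.exp (∑' i : ℕ, ‖p‖^(i+1)) with hU
  have hU0 : 0 < U := Real.exp_pos _
  refine ⟨U * c⁻¹ * c⁻¹, by positivity, ?_⟩
  intro N k
  rcases lt_or_ge k 0 with hk | hk
  · rw [qb_neg p N k hk, norm_zero]; positivity
  rcases lt_or_ge (N:ℤ) k with hk2 | hk2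
  · rw [qb_gt p N k hk2, norm_zero]; positivity
  · have hkn : k = (k.toNat : ℤ) := (Int.toNat_of_nonneg hk).symm
    have hkN : k.toNat ≤ N := by omega
    rw [hkn, qb_eq hp hkN]
    rw [norm_mul, norm_mul, norm_inv, norm_inv]
    have h1 : ‖poch p N‖ ≤ U := norm_poch_le hp N
    have h2 : ‖poch p k.toNat‖⁻¹ ≤ c⁻¹ := by
      apply inv_anti₀ hc (hpochge _)
    have h3 : ‖poch p (N - k.toNat)‖⁻¹ ≤ c⁻¹ := by
      apply inv_anti₀ hc (hpochge _)
    have hn1 : (0:ℝ) ≤ ‖poch p N‖ := norm_nonneg _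
    have hn2 : (0:ℝ) ≤ ‖poch p k.toNat‖⁻¹ := by positivity
    have hn3 : (0:ℝ) ≤ ‖poch p (N - k.toNat)‖⁻¹ := by positivity
    calc ‖poch p N‖ * ‖poch p k.toNat‖⁻¹ * ‖poch p (N - k.toNat)‖⁻¹
        ≤ U * c⁻¹ * c⁻¹ := by
          apply mul_le_mul (mul_le_mul h1 h2 hn2 hU0.le) h3 hn3 (by positivity)

section Fin

variable {Q z : ℂ}

/-- `Q^a * z^b` helper. -/
noncomputable def QZ (Q z : ℂ) (a b : ℤ) : ℂ := Q ^ a * z ^ b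

lemma mulQZ (hQ : Q ≠ 0) (hz : z ≠ 0) (a b c d : ℤ) :
    QZ Q z a b * QZ Q z c d = QZ Q z (a+c) (b+d) := by
  unfold QZ
  rw [zpow_add₀ hQ, zpow_add₀ hz]
  ring

lemma zpQZ (hQ : Q ≠ 0) (e : ℤ) : (Q^2 : ℂ) ^ e = QZ Q z (2*e) 0 := by
  unfold QZ
  rw [zpow_zero, mul_one, ← zpow_natCast Q 2, ← zpow_mul]
  norm_num

/-- summand of the finite Jacobi sum -/
noncomputable def Ffin (Q z : ℂ) (N : ℕ) (n : ℤ) : ℂ :=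
  qb (Q^2) (2*N) ((N:ℤ) + n) * QZ Q z (n^2) n

lemma Ffin_vanish (Q z : ℂ) (N : ℕ) (n : ℤ) (hn : n ∉ Finset.Icc (-(N:ℤ)) (N:ℤ)) :
    Ffin Q z N n = 0 := by
  simp only [Finset.mem_Icc, not_and_or, not_le] at hn
  unfold Ffin
  rcases hn with h | h
  · rw [qb_neg _ _ _ (by omega), zero_mul]
  · rw [qb_gt _ _ _ (by push_cast; omega), zero_mul]

lemma Ffin_summable (Q z : ℂ) (N : ℕ) : Summable (Ffin Q z N) :=
  summable_of_ne_finset_zero (s := Finset.Icc (-(N:ℤ)) (N:ℤ)) (Ffin_vanish Q z N)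

lemma Ffin_key (hQ : Q ≠ 0) (hz : z ≠ 0) (N : ℕ) (n : ℤ) :
    Ffin Q z (N+1) n = Ffin Q z N n * (1 + QZ Q z (4*N+2) 0)
      + Ffin Q z N (n-1) * QZ Q z (2*N+1) 1
      + Ffin Q z N (n+1) * QZ Q z (2*N+1) (-1) := by
  have hp : (Q^2 : ℂ) ≠ 0 := pow_ne_zero 2 hQ
  unfold Ffin
  rw [show 2*(N+1) = (2*N+1)+1 from by ring, qb_def, qb_pascal' hp, qb_pascal' hp]
  push_cast
  rw [show (N:ℤ) + 1 + n - 1 - 1 = (N:ℤ) + (n-1) from by ring,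
    show (N:ℤ) + 1 + n - 1 = (N:ℤ) + n from by ring,
    show (N:ℤ) + 1 + n = (N:ℤ) + (n+1) from by ring]
  rw [zpQZ hQ (z := z), zpQZ hQ (z := z), zpQZ hQ (z := z)]
  set A := qb (Q^2) (2*N) ((N:ℤ) + (n-1))
  set B := qb (Q^2) (2*N) ((N:ℤ) + n)
  set C := qb (Q^2) (2*N) ((N:ℤ) + (n+1))
  have r1 : QZ Q z (2*(2*(N:ℤ)+1-((N:ℤ)+n))) 0 * QZ Q z (n^2) n
      = QZ Q z ((n-1)^2) (n-1) * QZ Q z (2*(N:ℤ)+1) 1 := by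
    rw [mulQZ hQ hz, mulQZ hQ hz]
    congr 1 <;> ring
  have r2 : QZ Q z (2*((N:ℤ)+(n+1))) 0 * QZ Q z (2*(2*(N:ℤ)+1-((N:ℤ)+(n+1)))) 0
        * QZ Q z (n^2) n = QZ Q z (n^2) n * QZ Q z (4*(N:ℤ)+2) 0 := by
    rw [mulQZ hQ hz, mulQZ hQ hz, mulQZ hQ hz]
    congr 1 <;> ring
  have r3 : QZ Q z (2*((N:ℤ)+(n+1))) 0 * QZ Q z (n^2) n
      = QZ Q z ((n+1)^2) (n+1) * QZ Q z (2*(N:ℤ)+1) (-1) := by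
    rw [mulQZ hQ hz, mulQZ hQ hz]
    congr 1 <;> ring
  linear_combination A * r1 + B * r2 + C * r3

lemma scalar_id (hQ : Q ≠ 0) (hz : z ≠ 0) (N : ℕ) :
    (1 + z * Q^(2*N+1)) * (1 + z⁻¹ * Q^(2*N+1))
      = 1 + QZ Q z (4*N+2) 0 + QZ Q z (2*N+1) 1 + QZ Q z (2*N+1) (-1) := by
  unfold QZ
  rw [show (4*(N:ℤ)+2) = ((4*N+2 : ℕ) : ℤ) from by push_cast; ring,
    show (2*(N:ℤ)+1) = ((2*N+1 : ℕ) : ℤ) from by push_cast; ring,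
    zpow_natCast, zpow_natCast, zpow_one, zpow_zero, zpow_neg_one]
  have h4 : (Q:ℂ)^(4*N+2) = Q^(2*N+1) * Q^(2*N+1) := by
    rw [← pow_add]; congr 1; ring
  field_simp
  ring

lemma finid (hQ : Q ≠ 0) (hz : z ≠ 0) :
    ∀ N : ℕ, ∏ j ∈ range N, ((1 + z * Q^(2*j+1)) * (1 + z⁻¹ * Q^(2*j+1)))
      = ∑' n : ℤ, Ffin Q z N n := by
  intro N
  induction N with
  | zero =>
    rw [Finset.prod_range_zero, (tsum_eq_single 0 ?_ : ∑' n : ℤ, Ffin Q z 0 n = _)]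
    · simp [Ffin, qb, QZ]
    · intro n hn
      simp [Ffin, qb, QZ, hn]
  | succ N ih =>
    rw [Finset.prod_range_succ, ih]
    have hsum := Ffin_summable Q z N
    set c1 : ℂ := 1 + QZ Q z (4*N+2) 0 with hc1
    set c2 : ℂ := QZ Q z (2*N+1) 1 with hc2
    set c3 : ℂ := QZ Q z (2*N+1) (-1) with hc3
    have hA : Summable (fun n : ℤ => Ffin Q z N n * c1) := hsum.mul_right _
    have hB : Summable (fun n : ℤ => Ffin Q z N (n-1) * c2) := by
      have h2 := ((Equiv.subRight (1:ℤ)).summable_iff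
        (f := fun n : ℤ => Ffin Q z N n * c2)).mpr (hsum.mul_right c2)
      exact h2.congr fun n => by simp [Function.comp, Equiv.subRight]
    have hC : Summable (fun n : ℤ => Ffin Q z N (n+1) * c3) := by
      have h2 := ((Equiv.addRight (1:ℤ)).summable_iff
        (f := fun n : ℤ => Ffin Q z N n * c3)).mpr (hsum.mul_right c3)
      exact h2.congr fun n => by simp [Function.comp, Equiv.addRight]
    symm
    calc ∑' n : ℤ, Ffin Q z (N+1) n
        = ∑' n : ℤ, (Ffin Q z N n * c1 + Ffin Q z N (n-1) * c2 + Ffin Q z N (n+1) * c3) :=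
          tsum_congr (Ffin_key hQ hz N)
      _ = (∑' n : ℤ, (Ffin Q z N n * c1 + Ffin Q z N (n-1) * c2))
            + ∑' n : ℤ, Ffin Q z N (n+1) * c3 := Summable.tsum_add (hA.add hB) hC
      _ = (∑' n : ℤ, Ffin Q z N n * c1) + (∑' n : ℤ, Ffin Q z N (n-1) * c2)
            + ∑' n : ℤ, Ffin Q z N (n+1) * c3 := by rw [Summable.tsum_add hA hB]
      _ = (∑' n : ℤ, Ffin Q z N n * c1) + (∑' n : ℤ, Ffin Q z N n * c2)
            + ∑' n : ℤ, Ffin Q z N n * c3 := by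
          rw [← (Equiv.subRight (1:ℤ)).tsum_eq (fun n => Ffin Q z N n * c2),
            ← (Equiv.addRight (1:ℤ)).tsum_eq (fun n => Ffin Q z N n * c3)]
          rfl
      _ = (∑' n : ℤ, Ffin Q z N n) * c1 + (∑' n : ℤ, Ffin Q z N n) * c2
            + (∑' n : ℤ, Ffin Q z N n) * c3 := by
          rw [tsum_mul_right, tsum_mul_right, tsum_mul_right]
      _ = (∑' n : ℤ, Ffin Q z N n) * ((1 + z * Q^(2*N+1)) * (1 + z⁻¹ * Q^(2*N+1))) := by
          rw [scalar_id hQ hz, hc1]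
          push_cast
          ring

end Fin

lemma summable_super {r s : ℝ} (hr0 : 0 < r) (hr : r < 1) (hs : 0 < s) :
    Summable (fun n : ℕ => r^(n^2) * s^n) := by
  apply summable_of_ratio_test_tendsto_lt_one one_pos
  · filter_upwards with n
    positivity
  · have key : ∀ n : ℕ, ‖r^((n+1)^2) * s^(n+1)‖ / ‖r^(n^2) * s^n‖ = (r^2)^n * (r*s) := by
      intro n
      rw [Real.norm_eq_abs, Real.norm_eq_abs, abs_of_pos (by positivity),
        abs_of_pos (by positivity)]
      rw [show (n+1)^2 = n^2 + (2*n+1) from by ring, pow_add, pow_succ, pow_mul]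
      have h1 : r ^ (n^2) ≠ 0 := by positivity
      have h2 : s ^ n ≠ 0 := by positivity
      field_simp
      ring
    simp only [key]
    have h := (tendsto_pow_atTop_nhds_zero_of_lt_one (by positivity : (0:ℝ) ≤ r^2)
      (by nlinarith : r^2 < 1)).mul_const (r*s)
    simpa using h

lemma summable_QZnorm {Q z : ℂ} (hQ0 : Q ≠ 0) (hQ : ‖Q‖ < 1) (hz : z ≠ 0) :
    Summable (fun n : ℤ => ‖QZ Q z (n^2) n‖) := by
  have hr0 : 0 < ‖Q‖ := norm_pos_iff.mpr hQ0
  have hs0 : 0 < ‖z‖ := norm_pos_iff.mpr hz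
  have hnorm : ∀ n : ℤ, ‖QZ Q z (n^2) n‖ = ‖Q‖^(n^2) * ‖z‖^n := by
    intro n
    rw [QZ, norm_mul, norm_zpow, norm_zpow]
  apply Summable.of_nat_of_neg
  · apply (summable_super hr0 hQ hs0).congr
    intro n
    rw [hnorm]
    rw [show ((n:ℤ)^2) = ((n^2 : ℕ) : ℤ) from by push_cast; ring, zpow_natCast, zpow_natCast]
  · apply (summable_super hr0 hQ (inv_pos.mpr hs0)).congr
    intro n
    rw [hnorm]
    rw [show ((-(n:ℤ))^2) = ((n^2 : ℕ) : ℤ) from by push_cast; ring, zpow_natCast,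
      zpow_neg, zpow_natCast, inv_pow]
theorem jtp {Q z : ℂ} (hQ0 : Q ≠ 0) (hQ : ‖Q‖ < 1) (hz : z ≠ 0)
    (h1 : ‖z*Q‖ < 1) (h2 : ‖z⁻¹*Q‖ < 1) :
    ∑' n : ℤ, (Q^(n^2) * z^n) =
    (∏' i : ℕ, (1 - Q^2 * (Q^2)^i)) *
      ((∏' i : ℕ, (1 + z*Q * (Q^2)^i)) * (∏' i : ℕ, (1 + z⁻¹*Q * (Q^2)^i))) := by
  have hp : ‖(Q^2 : ℂ)‖ < 1 := by
    rw [norm_pow]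
    exact pow_lt_one₀ (norm_nonneg Q) hQ (by omega)
  have hp0 : (Q^2 : ℂ) ≠ 0 := pow_ne_zero 2 hQ0
  set p : ℂ := Q^2 with hpdef
  set G : ℂ := ∏' i : ℕ, (1 - p * p ^ i) with hGdef
  have hGne : G ≠ 0 := qpoch_ne_zero' hp hp
  have hmul : Multipliable fun i : ℕ => 1 - p * p ^ i := multipliable_poch hp hp
  have htend : Tendsto (fun m => poch p m) atTop (𝓝 G) :=
    hmul.hasProd.tendsto_prod_nat
  -- pointwise limit of the coefficients
  have hpt : ∀ n : ℤ, Tendsto (fun N => Ffin Q z N n) atTop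
      (𝓝 (G * G⁻¹ * G⁻¹ * QZ Q z (n^2) n)) := by
    intro n
    apply Tendsto.mul_const
    have c1 : Tendsto (fun N : ℕ => 2*N) atTop atTop :=
      tendsto_atTop_mono (fun N => by omega : ∀ N : ℕ, N ≤ 2*N) tendsto_id
    have c2 : Tendsto (fun N : ℕ => ((N:ℤ) + n).toNat) atTop atTop :=
      tendsto_atTop_mono (fun N => by omega : ∀ N : ℕ, N - n.natAbs ≤ ((N:ℤ) + n).toNat)
        (tendsto_sub_atTop_nat n.natAbs)
    have c3 : Tendsto (fun N : ℕ => 2*N - ((N:ℤ) + n).toNat) atTop atTop :=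
      tendsto_atTop_mono
        (fun N => by omega : ∀ N : ℕ, N - n.natAbs ≤ 2*N - ((N:ℤ) + n).toNat)
        (tendsto_sub_atTop_nat n.natAbs)
    have T1 := htend.comp c1
    have T2 := htend.comp c2
    have T3 := htend.comp c3
    have Tfull := (T1.mul (T2.inv₀ hGne)).mul (T3.inv₀ hGne)
    apply Tfull.congr'
    filter_upwards [eventually_ge_atTop n.natAbs] with N hN
    have hk : ((N:ℤ) + n).toNat ≤ 2*N := by omega
    have hcast : ((((N:ℤ) + n).toNat : ℤ)) = (N:ℤ) + n := by omega
    have hqb : qb p (2*N) ((N:ℤ) + n) = poch p (2*N) * (poch p (((N:ℤ)+n).toNat))⁻¹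
        * (poch p (2*N - ((N:ℤ)+n).toNat))⁻¹ := by
      conv_lhs => rw [← hcast]
      rw [qb_eq hp hk]
    rw [hqb]
    rfl
  -- domination
  obtain ⟨M, hM0, hMb⟩ := qb_norm_bound (p := p) hp
  have hbdd : Summable (fun n : ℤ => M * ‖QZ Q z (n^2) n‖) :=
    (summable_QZnorm hQ0 hQ hz).mul_left M
  have hdom : Tendsto (fun N => ∑' n : ℤ, Ffin Q z N n) atTop
      (𝓝 (∑' n : ℤ, G * G⁻¹ * G⁻¹ * QZ Q z (n^2) n)) := by
    apply tendsto_tsum_of_dominated_convergence hbdd hpt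
    filter_upwards with N n
    rw [Ffin, norm_mul]
    exact mul_le_mul_of_nonneg_right (hMb _ _) (norm_nonneg _)
  -- product side
  have hm1 : Multipliable fun i : ℕ => 1 + z*Q * (Q^2)^i := by
    have := multipliable_poch (a := -(z*Q)) (by rwa [norm_neg]) hp
    exact this.congr fun i => by ring
  have hm2 : Multipliable fun i : ℕ => 1 + z⁻¹*Q * (Q^2)^i := by
    have := multipliable_poch (a := -(z⁻¹*Q)) (by rwa [norm_neg]) hp
    exact this.congr fun i => by ring
  have hprodtend : Tendsto
      (fun N => ∏ j ∈ range N, ((1 + z * Q^(2*j+1)) * (1 + z⁻¹ * Q^(2*j+1)))) atTop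
      (𝓝 ((∏' i : ℕ, (1 + z*Q * (Q^2)^i)) * (∏' i : ℕ, (1 + z⁻¹*Q * (Q^2)^i)))) := by
    have e : ∀ N, ∏ j ∈ range N, ((1 + z * Q^(2*j+1)) * (1 + z⁻¹ * Q^(2*j+1)))
        = (∏ j ∈ range N, (1 + z*Q * (Q^2)^j)) * ∏ j ∈ range N, (1 + z⁻¹*Q * (Q^2)^j) := by
      intro N
      rw [← Finset.prod_mul_distrib]
      apply Finset.prod_congr rfl
      intro j _
      have : (Q:ℂ)^(2*j+1) = Q * (Q^2)^j := by
        rw [← pow_mul, ← pow_succ']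
      rw [this]
      ring
    simp only [e]
    exact (hm1.hasProd.tendsto_prod_nat).mul (hm2.hasProd.tendsto_prod_nat)
  -- identify the limits
  have heq : Tendsto (fun N => ∑' n : ℤ, Ffin Q z N n) atTop
      (𝓝 ((∏' i : ℕ, (1 + z*Q * (Q^2)^i)) * (∏' i : ℕ, (1 + z⁻¹*Q * (Q^2)^i)))) := by
    apply hprodtend.congr
    intro N
    exact finid hQ0 hz N
  have hlim := tendsto_nhds_unique hdom heq
  have hsimp : ∀ n : ℤ, G * G⁻¹ * G⁻¹ * QZ Q z (n^2) n = G⁻¹ * QZ Q z (n^2) n := by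
    intro n
    rw [mul_inv_cancel₀ hGne, one_mul]
  rw [tsum_congr hsimp, tsum_mul_left] at hlim
  have : ∑' n : ℤ, QZ Q z (n^2) n
      = G * ((∏' i : ℕ, (1 + z*Q * (Q^2)^i)) * (∏' i : ℕ, (1 + z⁻¹*Q * (Q^2)^i))) := by
    rw [← hlim]
    field_simp
  exact this


lemma qpoch_ne_zero {a q : ℂ} (ha : ‖a‖ < 1) (hq : ‖q‖ < 1) : qpoch a q ≠ 0 :=
  qpoch_ne_zero' ha hq

lemma sq_norm_lt {q : ℂ} (hq : ‖q‖ < 1) : ‖(q^2 : ℂ)‖ < 1 := by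
  rw [norm_pow]
  exact pow_lt_one₀ (norm_nonneg q) hq (by omega)

lemma qpoch_even_odd {a q : ℂ} (ha : ‖a‖ < 1) (hq : ‖q‖ < 1) (haq : ‖a*q‖ < 1) :
    qpoch a q = qpoch a (q^2) * qpoch (a*q) (q^2) := by
  have hq2 := sq_norm_lt hq
  have he : Multipliable fun k : ℕ => 1 - a * q^(2*k) :=
    (multipliable_poch ha hq2).congr fun k => by rw [pow_mul]
  have ho : Multipliable fun k : ℕ => 1 - a * q^(2*k+1) :=
    (multipliable_poch haq hq2).congr fun k => by
      rw [show (q:ℂ)^(2*k+1) = (q^2)^k * q from by rw [pow_succ, pow_mul]]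
      ring
  rw [qpoch, ← tprod_even_mul_odd (f := fun i : ℕ => 1 - a * q^i) he ho]
  congr 1
  · exact tprod_congr fun k => by rw [pow_mul]
  · exact tprod_congr fun k => by
      rw [show (q:ℂ)^(2*k+1) = (q^2)^k * q from by rw [pow_succ, pow_mul]]
      ring

lemma qpoch_mul_neg {a q : ℂ} (ha : ‖a‖ < 1) (hq : ‖q‖ < 1) :
    qpoch (a^2) (q^2) = qpoch a q * qpoch (-a) q := by
  have h1 := multipliable_poch ha hq
  have h2 := multipliable_poch (a := -a) (show ‖-a‖ < 1 by rwa [norm_neg]) hq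
  rw [qpoch, qpoch, qpoch, ← Multipliable.tprod_mul h1 h2]
  apply tprod_congr
  intro i
  have h3 : (q^2:ℂ)^i = (q^i)^2 := by rw [← pow_mul, mul_comm, pow_mul]
  rw [h3]
  ring

lemma norm_pow_lt {q : ℂ} (hq : ‖q‖ < 1) (k : ℕ) (hk : k ≠ 0) : ‖(q^k : ℂ)‖ < 1 := by
  rw [norm_pow]
  exact pow_lt_one₀ (norm_nonneg q) hq hk

end JTPaux

open JTPaux in
theorem stmt6 (q : ℂ) (hq : ‖q‖ < 1) :
    ∑' n : ℤ, q ^ (n * (5 * n + 1)) =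
    qpoch q (q ^ 10) * qpoch (q ^ 9) (q ^ 10) * qpoch (q ^ 10) (q ^ 10) *
      (qpoch (q ^ 8) (q ^ 20) * qpoch (q ^ 12) (q ^ 20)) /
      (qpoch q (q ^ 5) * qpoch (q ^ 4) (q ^ 5)) := by
  rcases eq_or_ne q 0 with rfl | hq0
  · -- q = 0
    have hL : ∑' n : ℤ, (0:ℂ) ^ (n * (5 * n + 1)) = 1 := by
      rw [tsum_eq_single 0]
      · norm_num
      · intro n hn
        rw [zero_zpow _ (by rcases lt_or_gt_of_ne hn with h | h <;> nlinarith)]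
    have h0 : ∀ a : ℂ, qpoch (a * 0) 0 = 1 := by intro a; simp [qpoch]
    have h1 : qpoch 0 0 = 1 := by simp [qpoch]
    have h2 : qpoch (0:ℂ) ((0:ℂ)^10) = 1 := by norm_num [qpoch]
    rw [hL]
    norm_num [qpoch]
  · -- main case
    have hQ0 : (q^5 : ℂ) ≠ 0 := pow_ne_zero _ hq0
    have hQ : ‖(q^5:ℂ)‖ < 1 := norm_pow_lt hq 5 (by norm_num)
    have hzq : q⁻¹ * q^5 = q^4 := by
      field_simp
    have h1 : ‖q * q^5‖ < 1 := by
      rw [show q * q^5 = q^6 from by ring]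
      exact norm_pow_lt hq 6 (by norm_num)
    have h2 : ‖q⁻¹ * q^5‖ < 1 := by
      rw [hzq]
      exact norm_pow_lt hq 4 (by norm_num)
    have key := jtp hQ0 hQ hq0 h1 h2
    -- rewrite the sum side
    have hsum : ∑' n : ℤ, q ^ (n * (5 * n + 1)) = ∑' n : ℤ, ((q^5:ℂ)^(n^2) * q^n) := by
      apply tsum_congr
      intro n
      rw [show n * (5*n+1) = 5*n^2 + n from by ring, zpow_add₀ hq0,
        show (5:ℤ) * n^2 = ((5:ℕ):ℤ) * n^2 from by norm_num, zpow_mul, zpow_natCast]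
    rw [hsum, key]
    -- rewrite the product side
    rw [show ((q^5:ℂ)^2) = q^10 from by ring]
    rw [show (q:ℂ) * q^5 = q^6 from by ring, hzq]
    have hP10 : (∏' i : ℕ, (1 - q^10 * (q^10:ℂ)^i)) = qpoch (q^10) (q^10) := rfl
    have hP6 : (∏' i : ℕ, (1 + q^6 * (q^10:ℂ)^i)) = qpoch (-(q^6)) (q^10) := by
      rw [qpoch]
      exact tprod_congr fun i => by ring
    have hP4 : (∏' i : ℕ, (1 + q^4 * (q^10:ℂ)^i)) = qpoch (-(q^4)) (q^10) := by
      rw [qpoch]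
      exact tprod_congr fun i => by ring
    have h10 : ‖(q^10:ℂ)‖ < 1 := norm_pow_lt hq 10 (by norm_num)
    have h4 : ‖(q^4:ℂ)‖ < 1 := norm_pow_lt hq 4 (by norm_num)
    have h6 : ‖(q^6:ℂ)‖ < 1 := norm_pow_lt hq 6 (by norm_num)
    have h9 : ‖(q^9:ℂ)‖ < 1 := norm_pow_lt hq 9 (by norm_num)
    have E1 : qpoch q (q^5) = qpoch q (q^10) * qpoch (q^6) (q^10) := by
      have h := qpoch_even_odd (a := q) hq hQ h1
      rw [show ((q^5:ℂ)^2) = q^10 from by ring, show (q:ℂ)*q^5 = q^6 from by ring] at h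
      exact h
    have E2 : qpoch (q^4) (q^5) = qpoch (q^4) (q^10) * qpoch (q^9) (q^10) := by
      have h := qpoch_even_odd (a := q^4) h4 hQ
        (by rw [show (q^4:ℂ)*q^5 = q^9 from by ring]; exact h9)
      rw [show ((q^5:ℂ)^2) = q^10 from by ring,
        show (q^4:ℂ)*q^5 = q^9 from by ring] at h
      exact h
    have E3 : qpoch (q^8) (q^20) = qpoch (q^4) (q^10) * qpoch (-(q^4)) (q^10) := by
      have h := qpoch_mul_neg (a := q^4) (q := q^10) h4 h10
      rw [show ((q^4:ℂ)^2) = q^8 from by ring, show ((q^10:ℂ)^2) = q^20 from by ring] at h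
      exact h
    have E4 : qpoch (q^12) (q^20) = qpoch (q^6) (q^10) * qpoch (-(q^6)) (q^10) := by
      have h := qpoch_mul_neg (a := q^6) (q := q^10) h6 h10
      rw [show ((q^6:ℂ)^2) = q^12 from by ring, show ((q^10:ℂ)^2) = q^20 from by ring] at h
      exact h
    rw [hP10, hP6, hP4, E1, E2, E3, E4]
    have n1 : qpoch q (q^10) ≠ 0 := qpoch_ne_zero hq h10
    have n4 : qpoch (q^4) (q^10) ≠ 0 := qpoch_ne_zero h4 h10
    have n6 : qpoch (q^6) (q^10) ≠ 0 := qpoch_ne_zero h6 h10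
    have n9 : qpoch (q^9) (q^10) ≠ 0 := qpoch_ne_zero h9 h10
    field_simp
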